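/- Let $A$ be a totally unimodular $m \times d$ integer matrix, let $b \in \mathbb{Z}^m$, let $n \ge 2$ be an integer, and let $x \in \mathbb{Z}^d$ satisfy $0 \le x_j \le n$ for all $j$ and $Ax = n\cdot b$. Then there exists a vector $z \in \{0,1\}^d$ with $Az = b$ and $\lfloor x_j / n \rfloor \le z_j \le \lceil x_j / n \rceil$ for all $j = 1, \dots, d$. -/

import Mathlib

open Matrix

lemma exists_invertible_rows {m f : ℕ} (C : Matrix (Fin m) (Fin f) ℚ)
    (h : ∀ u : Fin f → ℚ, C.mulVec u = 0 → u = 0) :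
    ∃ g : Fin f → Fin m, IsUnit (C.submatrix g id) := by
  classical
  have hcols : LinearIndependent ℚ Cᵀ.row := by
    rw [Fintype.linearIndependent_iff]
    intro u hu i
    have : C.mulVec u = 0 := by
      funext r
      have := congrFun hu r
      simpa [Matrix.mulVec, dotProduct, Finset.sum_apply, mul_comm] using this
    exact congrFun (h u this) i
  have hrank : C.rank = f := by
    have := hcols.rank_matrix
    rw [← Matrix.rank_transpose C, this, Fintype.card_fin]
  have hspan : Submodule.span ℚ (Set.range C.row) = ⊤ := by
    apply Submodule.eq_top_of_finrank_eq
    rw [← Matrix.rank_eq_finrank_span_row C, hrank]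
    simp [Module.finrank_pi]
  obtain ⟨s, hs_sub, hs_span, hs_li⟩ := exists_linearIndependent ℚ (Set.range C.row)
  rw [hspan] at hs_span
  have hsfin : s.Finite := (Set.finite_range C.row).subset hs_sub
  have := hsfin.fintype
  let b : Module.Basis s ℚ (Fin f → ℚ) := Module.Basis.mk hs_li (by rw [Subtype.range_coe, hs_span])
  have hcard : Fintype.card s = f := by
    have := Module.finrank_eq_card_basis b
    rw [Module.finrank_pi, Fintype.card_fin] at this
    omega
  let φ : Fin f ≃ s := (Fintype.equivFinOfCardEq hcard).symm
  choose g hg using fun a : Fin f => hs_sub (φ a).2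
  refine ⟨g, ?_⟩
  rw [← Matrix.linearIndependent_rows_iff_isUnit]
  have : (C.submatrix g id).row = Subtype.val ∘ φ := by
    funext a; exact hg a
  rw [this]
  exact hs_li.comp φ φ.injective

lemma tu_solve_integral {f : ℕ} (M : Matrix (Fin f) (Fin f) ℚ)
    (hdet : M.det = 1 ∨ M.det = -1) (hM : ∀ i j, ∃ t : ℤ, M i j = (t : ℚ))
    (v : Fin f → ℚ) (hv : ∀ i, ∃ t : ℤ, v i = (t : ℚ))
    (y : Fin f → ℚ) (hy : M.mulVec y = v) : ∀ i, ∃ t : ℤ, y i = (t : ℚ) := by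
  classical
  choose M0 hM0 using fun i => hM i
  choose v0 hv0 using hv
  set M₀ : Matrix (Fin f) (Fin f) ℤ := Matrix.of M0 with hM₀
  have hmap : M = M₀.map (Int.cast : ℤ → ℚ) := by
    funext i j; exact hM0 i j
  have hdet0 : ((M₀.det : ℤ) : ℚ) = M.det := by
    rw [hmap]
    exact (RingHom.map_det (Int.castRingHom ℚ) M₀)
  have hunit : IsUnit M₀.det := by
    rcases hdet with h | h
    · have : (M₀.det : ℚ) = ((1 : ℤ) : ℚ) := by rw [hdet0, h]; norm_num
      rw [Int.cast_injective this]; exact isUnit_one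
    · have : (M₀.det : ℚ) = ((-1 : ℤ) : ℚ) := by rw [hdet0, h]; norm_num
      rw [Int.cast_injective this]; exact (isUnit_one.neg)
  have hinv : Invertible M₀ := M₀.invertibleOfIsUnitDet hunit
  set u₀ : Fin f → ℤ := M₀⁻¹.mulVec v0 with hu₀
  have h1 : M₀.mulVec u₀ = v0 := by
    rw [hu₀, Matrix.mulVec_mulVec, Matrix.mul_nonsing_inv _ hunit, Matrix.one_mulVec]
  have h2 : M.mulVec (fun i => ((u₀ i : ℚ))) = v := by
    funext i
    have := congrFun h1 i
    rw [hmap]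
    simp only [Matrix.mulVec, dotProduct, Matrix.map_apply] at this ⊢
    rw [hv0 i, ← this]
    push_cast
    ring
  have hMunit : IsUnit M := by
    rw [Matrix.isUnit_iff_isUnit_det]
    rcases hdet with h | h <;> rw [h] <;> norm_num
  have hinj : Function.Injective M.mulVec := mulVec_injective_iff_isUnit.mpr hMunit
  have : y = fun i => ((u₀ i : ℚ)) := hinj (by rw [hy, h2])
  intro i; exact ⟨u₀ i, by rw [this]⟩

lemma int_sum {α : Type*} (s : Finset α) (f : α → ℚ)
    (h : ∀ j ∈ s, ∃ t : ℤ, f j = (t : ℚ)) : ∃ t : ℤ, ∑ j ∈ s, f j = (t : ℚ) := by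
  classical
  induction s using Finset.induction with
  | empty => exact ⟨0, by simp⟩
  | insert a s hx ih =>
    obtain ⟨t, ht⟩ := h _ (Finset.mem_insert_self _ _)
    obtain ⟨u, hu⟩ := ih (fun j hj => h j (Finset.mem_insert_of_mem hj))
    exact ⟨t + u, by rw [Finset.sum_insert hx, ht, hu]; push_cast; ring⟩

open scoped Classical in
lemma tu_round {m k : ℕ} (B : Matrix (Fin m) (Fin k) ℚ) (hB : B.IsTotallyUnimodular)
    (c : Fin m → ℚ) (hc : ∀ i, ∃ t : ℤ, c i = (t : ℚ)) :
    ∀ N : ℕ, ∀ y : Fin k → ℚ,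
      (Finset.univ.filter (fun j => ¬ ∃ t : ℤ, y j = (t : ℚ))).card ≤ N →
      (∀ j, 0 ≤ y j ∧ y j ≤ 1) → B.mulVec y = c →
      ∃ z : Fin k → ℚ, B.mulVec z = c ∧ (∀ j, 0 ≤ z j ∧ z j ≤ 1) ∧
        (∀ j, ∃ t : ℤ, z j = (t : ℚ)) ∧ (∀ j, (∃ t : ℤ, y j = (t : ℚ)) → z j = y j) := by
  have hBint : ∀ i j, ∃ t : ℤ, B i j = (t : ℚ) := by
    intro i j
    obtain ⟨s, hs⟩ := hB.apply i j
    cases s with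
    | zero => exact ⟨0, by simp [← hs]⟩
    | pos => exact ⟨1, by simp [← hs]⟩
    | neg => exact ⟨-1, by simp [← hs]⟩
  intro N
  induction N with
  | zero =>
    intro y hcard hbnd hy
    refine ⟨y, hy, hbnd, ?_, fun _ _ => rfl⟩
    intro j
    by_contra hj
    have : j ∈ Finset.univ.filter (fun j => ¬ ∃ t : ℤ, y j = (t : ℚ)) :=
      Finset.mem_filter.mpr ⟨Finset.mem_univ j, hj⟩
    have := Finset.card_pos.mpr ⟨j, this⟩
    omega
  | succ N ih =>
    intro y hcard hbnd hy
    set F := Finset.univ.filter (fun j => ¬ ∃ t : ℤ, y j = (t : ℚ)) with hF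
    by_cases hFe : F.Nonempty
    swap
    · refine ⟨y, hy, hbnd, ?_, fun _ _ => rfl⟩
      intro j
      by_contra hj
      exact hFe ⟨j, Finset.mem_filter.mpr ⟨Finset.mem_univ j, hj⟩⟩
    -- F nonempty
    have hfrac : ∀ j ∈ F, 0 < y j ∧ y j < 1 := by
      intro j hj
      rw [hF, Finset.mem_filter] at hj
      obtain ⟨hb0, hb1⟩ := hbnd j
      constructor
      · rcases lt_or_eq_of_le hb0 with h | h
        · exact h
        · exact absurd ⟨0, by simp [← h]⟩ hj.2
      · rcases lt_or_eq_of_le hb1 with h | h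
        · exact h
        · exact absurd ⟨1, by simp [h]⟩ hj.2
    by_cases hw : ∃ w : Fin k → ℚ, B.mulVec w = 0 ∧ (∀ j, w j ≠ 0 → j ∈ F) ∧ w ≠ 0
    · -- dependent case: move along the kernel
      obtain ⟨w, hw0, hwF, hwne⟩ := hw
      set s := Finset.univ.filter (fun j => w j ≠ 0) with hs
      have hsne : s.Nonempty := by
        by_contra h
        apply hwne
        funext j
        show w j = (0 : ℚ)
        by_contra hj
        exact h ⟨j, Finset.mem_filter.mpr ⟨Finset.mem_univ j, hj⟩⟩
      set bnd : Fin k → ℚ := fun j => if 0 < w j then (1 - y j) / w j else y j / (-(w j)) with hbnd'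
      have bnd_pos : ∀ j ∈ s, 0 < bnd j := by
        intro j hj
        rw [hs, Finset.mem_filter] at hj
        obtain ⟨h0, h1⟩ := hfrac j (hwF j hj.2)
        by_cases hwj : 0 < w j
        · rw [show bnd j = (1 - y j) / w j from if_pos hwj]
          exact div_pos (by linarith) hwj
        · rw [show bnd j = y j / (-(w j)) from if_neg hwj]
          have : w j < 0 := lt_of_le_of_ne (not_lt.mp hwj) hj.2
          exact div_pos h0 (by linarith)
      obtain ⟨j₀, hj₀s, hj₀min⟩ := s.exists_min_image bnd hsne
      set t := bnd j₀ with ht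
      have ht_pos : 0 < t := bnd_pos j₀ hj₀s
      set y' : Fin k → ℚ := fun j => y j + t * w j with hy'
      have hmul : B.mulVec y' = c := by
        have : y' = y + t • w := by funext j; simp [hy', Pi.add_apply, Pi.smul_apply, smul_eq_mul]
        rw [this, Matrix.mulVec_add, Matrix.mulVec_smul, hw0, smul_zero, add_zero, hy]
      have key_le : ∀ j ∈ s, 0 ≤ y' j ∧ y' j ≤ 1 := by
        intro j hj
        have hjs := hj
        rw [hs, Finset.mem_filter] at hjs
        obtain ⟨h0, h1⟩ := hfrac j (hwF j hjs.2)
        have htle : t ≤ bnd j := hj₀min j hj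
        refine ⟨show (0:ℚ) ≤ y j + t * w j from ?_, show y j + t * w j ≤ 1 from ?_⟩
        all_goals by_cases hwj : 0 < w j
        · nlinarith
        · have hwj' : w j < 0 := lt_of_le_of_ne (not_lt.mp hwj) hjs.2
          have hb : bnd j = y j / (-(w j)) := if_neg hwj
          have h2 : bnd j * w j = - y j := by
            rw [hb, div_mul_eq_mul_div, div_eq_iff (neg_ne_zero.mpr hjs.2)]; ring
          have : bnd j * w j ≤ t * w j :=
            mul_le_mul_of_nonpos_right htle (le_of_lt hwj')
          linarith
        · have hb : bnd j = (1 - y j) / w j := if_pos hwj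
          have h2 : bnd j * w j = 1 - y j := by
            rw [hb]; field_simp
          have : t * w j ≤ bnd j * w j :=
            mul_le_mul_of_nonneg_right htle (le_of_lt hwj)
          linarith
        · have hwj' : w j < 0 := lt_of_le_of_ne (not_lt.mp hwj) hjs.2
          nlinarith
      have hbnd'' : ∀ j, 0 ≤ y' j ∧ y' j ≤ 1 := by
        intro j
        by_cases hwj : w j = 0
        · rw [hy']; simp [hwj]; exact hbnd j
        · exact key_le j (by simp [hs, hwj])
      have hint_j₀ : ∃ u : ℤ, y' j₀ = (u : ℚ) := by
        have hj₀ := hj₀s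
        rw [hs, Finset.mem_filter] at hj₀
        by_cases hwj : 0 < w j₀
        · refine ⟨1, ?_⟩
          show y j₀ + t * w j₀ = ((1 : ℤ) : ℚ)
          rw [show t = (1 - y j₀) / w j₀ from if_pos hwj,
            div_mul_cancel₀ _ (ne_of_gt hwj)]
          push_cast; ring
        · refine ⟨0, ?_⟩
          show y j₀ + t * w j₀ = ((0 : ℤ) : ℚ)
          have hwj' : w j₀ ≠ 0 := hj₀.2
          have h2 : y j₀ / (-(w j₀)) * w j₀ = - y j₀ := by
            rw [div_mul_eq_mul_div, div_eq_iff (neg_ne_zero.mpr hwj')]; ring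
          rw [show t = y j₀ / (-(w j₀)) from if_neg hwj, h2]
          push_cast; ring
      have hpres : ∀ j, (∃ u : ℤ, y j = (u : ℚ)) → y' j = y j := by
        intro j hj
        have : w j = 0 := by
          by_contra h
          have := hwF j h
          rw [hF, Finset.mem_filter] at this
          exact this.2 hj
        show y j + t * w j = y j
        rw [this, mul_zero, add_zero]
      have hcard' : (Finset.univ.filter (fun j => ¬ ∃ u : ℤ, y' j = (u : ℚ))).card ≤ N := by
        have hsub : (Finset.univ.filter (fun j => ¬ ∃ u : ℤ, y' j = (u : ℚ))) ⊆ F.erase j₀ := by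
          intro j hj
          rw [Finset.mem_filter] at hj
          rw [Finset.mem_erase]
          constructor
          · rintro rfl; exact hj.2 hint_j₀
          · rw [hF, Finset.mem_filter]
            refine ⟨Finset.mem_univ j, ?_⟩
            intro hyj
            exact hj.2 (by rw [hpres j hyj]; exact hyj)
        have hj₀F : j₀ ∈ F := by
          have := hj₀s; rw [hs, Finset.mem_filter] at this; exact hwF j₀ this.2
        have := Finset.card_le_card hsub
        have := Finset.card_erase_of_mem hj₀F
        omega
      obtain ⟨z, hz1, hz2, hz3, hz4⟩ := ih y' hcard' hbnd'' hmul
      refine ⟨z, hz1, hz2, hz3, ?_⟩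
      intro j hj
      have hwj : y' j = y j := hpres j hj
      rw [hz4 j (by rw [hwj]; exact hj), hwj]
    · -- independent case: contradiction
      exfalso
      push_neg at hw
      set f := F.card with hf
      set e : Fin f → Fin k := fun i => ((F.equivFin.symm i : {x // x ∈ F}) : Fin k) with he
      have heF : ∀ i, e i ∈ F := fun i => (F.equivFin.symm i).2
      set C : Matrix (Fin m) (Fin f) ℚ := B.submatrix id e with hC
      have sum_F : ∀ h : Fin k → ℚ, ∑ i : Fin f, h (e i) = ∑ j ∈ F, h j := by
        intro h
        rw [← Finset.sum_coe_sort F h]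
        exact Equiv.sum_comp F.equivFin.symm (fun x => h x.1)
      have hker : ∀ u : Fin f → ℚ, C.mulVec u = 0 → u = 0 := by
        intro u hu
        set w : Fin k → ℚ := fun j => if h : j ∈ F then u (F.equivFin ⟨j, h⟩) else 0 with hwdef
        have hwe : ∀ i : Fin f, w (e i) = u i := by
          intro i
          rw [hwdef]
          simp only [heF i, dif_pos]
          congr 1
          have : (⟨e i, heF i⟩ : {x // x ∈ F}) = F.equivFin.symm i := rfl
          rw [this, Equiv.apply_symm_apply]
        have hBw : B.mulVec w = 0 := by
          funext r
          show (B.mulVec w) r = (0 : ℚ)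
          have h1 : (B.mulVec w) r = ∑ j ∈ F, B r j * w j := by
            rw [Matrix.mulVec, dotProduct]
            apply (Finset.sum_subset (Finset.subset_univ F) _).symm
            intro j _ hj
            rw [hwdef]; simp [hj]
          have h2 : ∑ j ∈ F, B r j * w j = ∑ i : Fin f, B r (e i) * w (e i) := (sum_F _).symm
          have h3 : (C.mulVec u) r = 0 := by rw [hu]; rfl
          rw [h1, h2]
          rw [Matrix.mulVec, dotProduct] at h3
          rw [← h3]
          apply Finset.sum_congr rfl
          intro i _
          rw [hwe i]
          rfl
        have hwsupp : ∀ j, w j ≠ 0 → j ∈ F := by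
          intro j hj
          by_contra h
          rw [hwdef] at hj
          simp [h] at hj
        have : w = 0 := by
          by_contra h
          exact h (hw w hBw hwsupp)
        funext i
        have := congrFun this (e i)
        rw [hwe i] at this
        exact this
      obtain ⟨g, hgU⟩ := exists_invertible_rows C hker
      set M : Matrix (Fin f) (Fin f) ℚ := C.submatrix g id with hM
      have hMsub : M = B.submatrix g e := by
        rw [hM, hC, Matrix.submatrix_submatrix]
        rfl
      have hMTU : M.IsTotallyUnimodular := hMsub ▸ hB.submatrix g e
      have hdetM : M.det = 1 ∨ M.det = -1 := by
        have h1 : IsUnit M.det := (Matrix.isUnit_iff_isUnit_det M).mp hgU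
        obtain ⟨sg, hsg⟩ := hMTU f id id Function.injective_id Function.injective_id
        rw [Matrix.submatrix_id_id] at hsg
        cases sg with
        | zero => rw [← hsg] at h1; simp at h1
        | pos => left; rw [← hsg]; rfl
        | neg => right; rw [← hsg]; simp
      have hMint : ∀ i j, ∃ u : ℤ, M i j = (u : ℚ) := by
        intro i j; rw [hMsub]; exact hBint _ _
      set v : Fin f → ℚ := fun a => c (g a) - ∑ j ∈ Fᶜ, B (g a) j * y j with hv
      have hvint : ∀ a, ∃ u : ℤ, v a = (u : ℚ) := by
        intro a
        obtain ⟨t1, ht1⟩ := hc (g a)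
        obtain ⟨t2, ht2⟩ := int_sum Fᶜ (fun j => B (g a) j * y j) (by
          intro j hj
          obtain ⟨u1, hu1⟩ := hBint (g a) j
          have hj' : ¬ (¬ ∃ u : ℤ, y j = (u : ℚ)) := by
            rw [Finset.mem_compl, hF, Finset.mem_filter] at hj
            intro h
            exact hj ⟨Finset.mem_univ j, h⟩
          obtain ⟨u2, hu2⟩ := not_not.mp hj'
          exact ⟨u1 * u2, by show B (g a) j * y j = ((u1 * u2 : ℤ) : ℚ); rw [hu1, hu2]; push_cast; ring⟩)
        refine ⟨t1 - t2, ?_⟩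
        show c (g a) - ∑ j ∈ Fᶜ, B (g a) j * y j = ((t1 - t2 : ℤ) : ℚ)
        rw [ht1, ht2]; push_cast; ring
      have heq : M.mulVec (fun i => y (e i)) = v := by
        funext a
        have hrow := congrFun hy (g a)
        rw [Matrix.mulVec, dotProduct] at hrow
        have hsplit : ∑ j ∈ F, B (g a) j * y j + ∑ j ∈ Fᶜ, B (g a) j * y j
            = ∑ j : Fin k, B (g a) j * y j := F.sum_add_sum_compl _
        have h2 : (M.mulVec (fun i => y (e i))) a = ∑ j ∈ F, B (g a) j * y j := by
          rw [Matrix.mulVec, dotProduct, ← sum_F (fun j => B (g a) j * y j)]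
          apply Finset.sum_congr rfl
          intro i _
          rw [hMsub]
          rfl
        rw [h2]
        show ∑ j ∈ F, B (g a) j * y j = c (g a) - ∑ j ∈ Fᶜ, B (g a) j * y j
        rw [hrow] at hsplit
        linarith
      have hyint := tu_solve_integral M hdetM hMint v hvint _ heq
      obtain ⟨j, hj⟩ := hFe
      have hjF := hj
      rw [hF, Finset.mem_filter] at hjF
      apply hjF.2
      have : e (F.equivFin ⟨j, hj⟩) = j := by
        rw [he]
        simp only [Equiv.symm_apply_apply]
      obtain ⟨u, hu⟩ := hyint (F.equivFin ⟨j, hj⟩)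
      rw [this] at hu
      exact ⟨u, hu⟩

/-- The rounding step in the proof of Lemma 1: given a totally unimodular `m × d` integer
matrix `A`, an integer vector `b`, an integer `n ≥ 2`, and `x ∈ {0,…,n}^d` with `Ax = n·b`,
there is `z ∈ {0,1}^d` with `Az = b` and `⌊xⱼ/n⌋ ≤ zⱼ ≤ ⌈xⱼ/n⌉` for all `j`. -/
theorem unimodular_rounding (m d n : ℕ) (hn : 2 ≤ n)
    (A : Matrix (Fin m) (Fin d) ℤ) (hA : A.IsTotallyUnimodular)
    (b : Fin m → ℤ) (x : Fin d → ℤ)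
    (hx : ∀ j, 0 ≤ x j ∧ x j ≤ (n : ℤ))
    (hAx : A.mulVec x = (n : ℤ) • b) :
    ∃ z : Fin d → ℤ,
      (∀ j, z j = 0 ∨ z j = 1) ∧
      A.mulVec z = b ∧
      (∀ j, ⌊(x j : ℚ) / (n : ℚ)⌋ ≤ z j ∧ z j ≤ ⌈(x j : ℚ) / (n : ℚ)⌉) := by
  classical
  have hn0 : (0 : ℚ) < (n : ℚ) := by
    have : 0 < n := by omega
    exact_mod_cast this
  set B : Matrix (Fin m) (Fin d) ℚ := A.map (Int.cast : ℤ → ℚ) with hBdef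
  have hBtu : B.IsTotallyUnimodular := by
    intro k f g hf hg
    obtain ⟨s, hs⟩ := hA k f g hf hg
    refine ⟨s, ?_⟩
    have h1 : B.submatrix f g = (A.submatrix f g).map (Int.cast : ℤ → ℚ) := rfl
    have h2 : ((A.submatrix f g).map (Int.cast : ℤ → ℚ)).det
        = (((A.submatrix f g).det : ℤ) : ℚ) :=
      (RingHom.map_det (Int.castRingHom ℚ) (A.submatrix f g)).symm
    rw [h1, h2, ← hs]
    cases s <;> simp
  set c : Fin m → ℚ := fun i => (b i : ℚ) with hcdef
  set y : Fin d → ℚ := fun j => (x j : ℚ) / (n : ℚ) with hydef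
  have hbnd : ∀ j, 0 ≤ y j ∧ y j ≤ 1 := by
    intro j
    obtain ⟨h0, h1⟩ := hx j
    constructor
    · apply div_nonneg _ (le_of_lt hn0)
      exact_mod_cast h0
    · rw [div_le_one hn0]
      exact_mod_cast h1
  have hy : B.mulVec y = c := by
    funext i
    have hr := congrFun hAx i
    simp only [Matrix.mulVec, dotProduct, Pi.smul_apply, smul_eq_mul] at hr
    show ∑ j, B i j * y j = (b i : ℚ)
    have h1 : ∀ j, B i j * y j = ((A i j * x j : ℤ) : ℚ) / (n : ℚ) := by
      intro j
      show ((A i j : ℚ)) * ((x j : ℚ) / (n : ℚ)) = _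
      push_cast
      ring
    rw [Finset.sum_congr rfl (fun j _ => h1 j), ← Finset.sum_div]
    rw [show (∑ j, ((A i j * x j : ℤ) : ℚ)) = (((∑ j, A i j * x j : ℤ)) : ℚ) by push_cast; ring]
    rw [hr]
    push_cast
    field_simp
  obtain ⟨z, hz1, hz2, hz3, hz4⟩ := tu_round B hBtu c (fun i => ⟨b i, rfl⟩) d y
    (le_trans (Finset.card_filter_le _ _) (by simp)) hbnd hy
  choose zz hzz using hz3
  refine ⟨zz, ?_, ?_, ?_⟩
  · intro j
    obtain ⟨h0, h1⟩ := hz2 j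
    rw [hzz j] at h0 h1
    have h0' : (0 : ℤ) ≤ zz j := by exact_mod_cast h0
    have h1' : zz j ≤ (1 : ℤ) := by exact_mod_cast h1
    omega
  · funext i
    have h := congrFun hz1 i
    rw [Matrix.mulVec, dotProduct] at h
    have h2 : ∑ j, B i j * z j = ∑ j, ((A i j : ℚ)) * ((zz j : ℚ)) :=
      Finset.sum_congr rfl (fun j _ => by rw [hzz j]; rfl)
    rw [h2] at h
    apply @Int.cast_injective ℚ _
    show (((∑ j, A i j * zz j) : ℤ) : ℚ) = ((b i : ℤ) : ℚ)
    push_cast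
    exact h
  · intro j
    have hzval : zz j = 0 ∨ zz j = 1 := by
      obtain ⟨h0, h1⟩ := hz2 j
      rw [hzz j] at h0 h1
      have h0' : (0 : ℤ) ≤ zz j := by exact_mod_cast h0
      have h1' : zz j ≤ (1 : ℤ) := by exact_mod_cast h1
      omega
    by_cases hyint : ∃ u : ℤ, y j = (u : ℚ)
    · have hzy : (zz j : ℚ) = y j := by rw [← hzz j, hz4 j hyint]
      have hfl : ⌊(x j : ℚ) / (n : ℚ)⌋ = zz j := by
        show ⌊y j⌋ = zz j
        rw [← hzy, Int.floor_intCast]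
      have hce : ⌈(x j : ℚ) / (n : ℚ)⌉ = zz j := by
        show ⌈y j⌉ = zz j
        rw [← hzy, Int.ceil_intCast]
      rw [hfl, hce]
      omega
    · have h0 : 0 < y j := by
        rcases lt_or_eq_of_le (hbnd j).1 with h | h
        · exact h
        · exact absurd ⟨0, by rw [← h]; norm_num⟩ hyint
      have h1 : y j < 1 := by
        rcases lt_or_eq_of_le (hbnd j).2 with h | h
        · exact h
        · exact absurd ⟨1, by rw [h]; norm_num⟩ hyint
      have hfl : ⌊(x j : ℚ) / (n : ℚ)⌋ < 1 := by
        show ⌊y j⌋ < (1 : ℤ)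
        rw [Int.floor_lt]
        exact_mod_cast h1
      have hce : (0 : ℤ) < ⌈(x j : ℚ) / (n : ℚ)⌉ := by
        show (0 : ℤ) < ⌈y j⌉
        rw [Int.lt_ceil]
        exact_mod_cast h0
      omega
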